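/- Suppose β, η, γ solve the first-order ODE system −β' + γ − iωη = f₂, η' + iωβ = g₂, η + iω·λ⁻¹·γ = g₃ almost everywhere on (0,L), with boundary conditions β(0) = 0 and λ̃·η(L) = iω·β(L). Then β satisfies the weak second-order formulation: for every H¹(0,L) function v with v(0) = 0, ∫₀ᴸ β'·conj(v') dt + (λ − ω²)·∫₀ᴸ β·conj(v) dt + λ̃·β(L)·conj(v(L)) = −∫₀ᴸ f₂·conj(v') dt + (λ/(iω))·∫₀ᴸ g₃·conj(v') dt + ((λ − ω²)/(iω))·∫₀ᴸ g₂·conj(v) dt. -/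

import Mathlib

open MeasureTheory

/-- A function in `H¹(0,L)`: a pair `(toFun, deriv)` where `toFun` is continuous on `[0,L]`,
`deriv` is square-integrable on `(0,L)`, and `toFun x = toFun 0 + ∫₀ˣ deriv` on `[0,L]`. -/
structure H1 (L : ℝ) where
  toFun : ℝ → ℂ
  deriv : ℝ → ℂ
  continuousOn : ContinuousOn toFun (Set.Icc 0 L)
  memLp_deriv : MemLp deriv 2 (volume.restrict (Set.Ioo 0 L))
  eq_intderiv : ∀ x ∈ Set.Icc 0 L, toFun x = toFun 0 + ∫ t in (0:ℝ)..x, deriv t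

/-- The sesquilinear form
`a¹ᴰ_κ(u,v) = ∫₀ᴸ u' conj(v') + κ² ∫₀ᴸ u conj(v) + κ u(L) conj(v(L))`. -/
noncomputable def a1D (L : ℝ) (κ : ℂ) (u v : H1 L) : ℂ :=
  (∫ t in Set.Ioo (0:ℝ) L, u.deriv t * star (v.deriv t)) +
    κ ^ 2 * (∫ t in Set.Ioo (0:ℝ) L, u.toFun t * star (v.toFun t)) +
    κ * u.toFun L * star (v.toFun L)

/-- The weighted `H¹` norm `‖u‖²_{1,s} = ‖u'‖²_{L²(0,L)} + s² ‖u‖²_{L²(0,L)}`. -/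
noncomputable def h1Norm (L : ℝ) (s : ℝ) (u : H1 L) : ℝ :=
  Real.sqrt ((∫ t in Set.Ioo (0:ℝ) L, ‖u.deriv t‖ ^ 2) +
    s ^ 2 * ∫ t in Set.Ioo (0:ℝ) L, ‖u.toFun t‖ ^ 2)

/-- The `L²(0,L)` norm. -/
noncomputable def l2Norm (L : ℝ) (f : ℝ → ℂ) : ℝ :=
  Real.sqrt (∫ t in Set.Ioo (0:ℝ) L, ‖f t‖ ^ 2)

-- Auxiliary lemmas
lemma isFiniteMeasure_muL (L : ℝ) : IsFiniteMeasure (volume.restrict (Set.Ioo (0:ℝ) L)) :=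
  ⟨by simp [Real.volume_Ioo]⟩

lemma memLp_star {L : ℝ} {f : ℝ → ℂ} (hf : MemLp f 2 (volume.restrict (Set.Ioo (0:ℝ) L))) :
    MemLp (fun t => star (f t)) 2 (volume.restrict (Set.Ioo (0:ℝ) L)) :=
  MemLp.of_le hf ((Complex.continuous_conj).comp_aestronglyMeasurable hf.1) (by simp)

lemma integrable_mul_L2 {L : ℝ} {f g : ℝ → ℂ}
    (hf : MemLp f 2 (volume.restrict (Set.Ioo (0:ℝ) L)))
    (hg : MemLp g 2 (volume.restrict (Set.Ioo (0:ℝ) L))) :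
    Integrable (fun t => f t * g t) (volume.restrict (Set.Ioo (0:ℝ) L)) := by
  rw [← memLp_one_iff_integrable]
  have h : (1 : ENNReal) / 1 = 1 / 2 + 1 / 2 := by
    rw [ENNReal.div_add_div_same, one_add_one_eq_two,
      ENNReal.div_self two_ne_zero ENNReal.ofNat_ne_top, one_div_one]
  exact hg.smul (r := 1) hf

lemma memLp_toFun {L : ℝ} (u : H1 L) :
    MemLp u.toFun 2 (volume.restrict (Set.Ioo (0:ℝ) L)) := by
  haveI := isFiniteMeasure_muL L
  obtain ⟨C, hC⟩ :=
    (isCompact_Icc (a := (0:ℝ)) (b := L)).exists_bound_of_continuousOn u.continuousOn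
  have hmeas : AEStronglyMeasurable u.toFun (volume.restrict (Set.Ioo (0:ℝ) L)) :=
    (u.continuousOn.mono Set.Ioo_subset_Icc_self).aestronglyMeasurable measurableSet_Ioo
  exact MemLp.mono_exponent (memLp_top_of_bound hmeas C (by
    filter_upwards [ae_restrict_mem measurableSet_Ioo] with t ht
    exact hC t (Set.Ioo_subset_Icc_self ht))) le_top

lemma integrable_deriv {L : ℝ} (u : H1 L) :
    Integrable u.deriv (volume.restrict (Set.Ioo (0:ℝ) L)) := by
  haveI := isFiniteMeasure_muL L
  exact u.memLp_deriv.integrable one_le_two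

lemma h1_val {L : ℝ} (u : H1 L) {t : ℝ} (ht : t ∈ Set.Icc (0:ℝ) L) :
    u.toFun t = u.toFun 0 + ∫ s in Set.Ioo (0:ℝ) t, u.deriv s := by
  rw [u.eq_intderiv t ht, intervalIntegral.integral_of_le ht.1, integral_Ioc_eq_integral_Ioo]

lemma key_parts (μ : Measure ℝ) [IsFiniteMeasure μ] (hdiag : ∀ t : ℝ, μ {t} = 0)
    (f g : ℝ → ℂ) (hf : Integrable f μ) (hg : Integrable g μ) :
    (∫ t, f t * ∫ s in Set.Iio t, g s ∂μ ∂μ) + (∫ t, (∫ s in Set.Iio t, f s ∂μ) * g t ∂μ)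
      = (∫ t, f t ∂μ) * (∫ t, g t ∂μ) := by
  set K : ℝ × ℝ → ℂ := fun p => f p.1 * g p.2 with hK
  have hKint : Integrable K (μ.prod μ) := hf.mul_prod hg
  have hK2int : Integrable (fun p : ℝ × ℝ => f p.2 * g p.1) (μ.prod μ) := by
    have := hg.mul_prod hf
    simpa [mul_comm] using this
  have hmlt : MeasurableSet {p : ℝ × ℝ | p.2 < p.1} :=
    measurableSet_lt measurable_snd measurable_fst
  have hmgt : MeasurableSet {p : ℝ × ℝ | p.1 < p.2} :=
    measurableSet_lt measurable_fst measurable_snd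
  set G1 : ℝ × ℝ → ℂ := {p : ℝ × ℝ | p.2 < p.1}.indicator K with hG1
  set G2 : ℝ × ℝ → ℂ := {p : ℝ × ℝ | p.2 < p.1}.indicator (fun p => f p.2 * g p.1) with hG2
  set G3 : ℝ × ℝ → ℂ := {p : ℝ × ℝ | p.1 < p.2}.indicator K with hG3
  have hG1int : Integrable G1 (μ.prod μ) := hKint.indicator hmlt
  have hG2int : Integrable G2 (μ.prod μ) := hK2int.indicator hmlt
  have hG3int : Integrable G3 (μ.prod μ) := hKint.indicator hmgt
  have e1 : (∫ t, f t * ∫ s in Set.Iio t, g s ∂μ ∂μ) = ∫ t, ∫ s, G1 (t, s) ∂μ ∂μ := by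
    refine integral_congr_ae (Filter.Eventually.of_forall fun t => ?_)
    dsimp only
    rw [← integral_indicator measurableSet_Iio, ← integral_const_mul]
    refine integral_congr_ae (Filter.Eventually.of_forall fun s => ?_)
    by_cases h : s < t <;>
      simp [hG1, hK, Set.indicator_apply, h, Set.mem_Iio]
  have e2 : (∫ t, (∫ s in Set.Iio t, f s ∂μ) * g t ∂μ) = ∫ t, ∫ s, G2 (t, s) ∂μ ∂μ := by
    refine integral_congr_ae (Filter.Eventually.of_forall fun t => ?_)
    dsimp only
    rw [← integral_indicator measurableSet_Iio, ← integral_mul_const]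
    refine integral_congr_ae (Filter.Eventually.of_forall fun s => ?_)
    by_cases h : s < t <;>
      simp [hG2, Set.indicator_apply, h, Set.mem_Iio]
  have e3 : (∫ t, ∫ s, G2 (t, s) ∂μ ∂μ) = ∫ t, ∫ s, G3 (t, s) ∂μ ∂μ := by
    rw [integral_integral_swap (by exact hG2int)]
    refine integral_congr_ae (Filter.Eventually.of_forall fun t => ?_)
    refine integral_congr_ae (Filter.Eventually.of_forall fun s => ?_)
    by_cases h : t < s <;>
      simp [hG2, hG3, hK, Set.indicator_apply, h]
  rw [e1, e2, e3, ← integral_add hG1int.integral_prod_left hG3int.integral_prod_left]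
  have e4 : ∀ᵐ t ∂μ, ((∫ s, G1 (t, s) ∂μ) + ∫ s, G3 (t, s) ∂μ) = f t * ∫ s, g s ∂μ := by
    filter_upwards [hG1int.prod_right_ae, hG3int.prod_right_ae] with t h1 h3
    have hpt : ∀ s, G1 (t, s) + G3 (t, s)
        = f t * g s - ({t} : Set ℝ).indicator (fun s => f t * g s) s := by
      intro s
      rcases lt_trichotomy s t with h | rfl | h
      · simp [hG1, hG3, hK, Set.indicator_apply, h, h.ne, not_lt.2 h.le]
      · simp [hG1, hG3, hK, Set.indicator_apply]
      · simp [hG1, hG3, hK, Set.indicator_apply, h, h.ne', not_lt.2 h.le]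
    rw [← integral_add h1 h3]
    calc (∫ s, (G1 (t, s) + G3 (t, s)) ∂μ)
        = ∫ s, (f t * g s - ({t} : Set ℝ).indicator (fun s => f t * g s) s) ∂μ :=
          integral_congr_ae (Filter.Eventually.of_forall hpt)
      _ = f t * ∫ s, g s ∂μ := by
          rw [integral_sub (hg.const_mul _)
              ((hg.const_mul _).indicator (measurableSet_singleton t)),
            integral_indicator (measurableSet_singleton t), integral_const_mul]
          have : μ.restrict {t} = 0 := Measure.restrict_eq_zero.2 (hdiag t)
          simp [this]
  rw [integral_congr_ae e4, integral_mul_const]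

lemma h1_parts {L : ℝ} (hL : 0 < L) (u w : H1 L) :
    (∫ t in Set.Ioo (0:ℝ) L, u.deriv t * star (w.toFun t)) +
      (∫ t in Set.Ioo (0:ℝ) L, u.toFun t * star (w.deriv t)) =
      u.toFun L * star (w.toFun L) - u.toFun 0 * star (w.toFun 0) := by
  haveI := isFiniteMeasure_muL L
  set μ := volume.restrict (Set.Ioo (0:ℝ) L) with hμ
  have hdiag : ∀ t : ℝ, μ {t} = 0 := by
    intro t
    rw [hμ, Measure.restrict_apply (measurableSet_singleton t)]
    exact measure_mono_null Set.inter_subset_left (Real.volume_singleton)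
  have hfu : Integrable u.deriv μ := integrable_deriv u
  have hgw : Integrable (fun t => star (w.deriv t)) μ :=
    (memLp_star w.memLp_deriv).integrable one_le_two
  have hIio : ∀ (h : ℝ → ℂ), ∀ t ∈ Set.Ioo (0:ℝ) L,
      (∫ s in Set.Iio t, h s ∂μ) = ∫ s in Set.Ioo (0:ℝ) t, h s := by
    intro h t ht
    rw [hμ, Measure.restrict_restrict measurableSet_Iio, Set.Iio_inter_Ioo,
      min_eq_left ht.2.le]
  have hstarint : ∀ (ν : Measure ℝ), (∫ s, star (w.deriv s) ∂ν) = star (∫ s, w.deriv s ∂ν) := by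
    intro ν
    have h := integral_conj (μ := ν) (f := w.deriv)
    simp only [starRingEnd_apply] at h
    exact h
  have hA : u.toFun L = u.toFun 0 + ∫ t, u.deriv t ∂μ := h1_val u ⟨hL.le, le_rfl⟩
  have hB : star (w.toFun L) = star (w.toFun 0) + ∫ t, star (w.deriv t) ∂μ := by
    rw [h1_val w ⟨hL.le, le_rfl⟩, star_add, hstarint]
  have haeu : ∀ᵐ t ∂μ, u.toFun t = u.toFun 0 + ∫ s in Set.Iio t, u.deriv s ∂μ := by
    filter_upwards [ae_restrict_mem measurableSet_Ioo] with t ht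
    rw [hIio u.deriv t ht]
    exact h1_val u (Set.Ioo_subset_Icc_self ht)
  have haew : ∀ᵐ t ∂μ, star (w.toFun t)
      = star (w.toFun 0) + ∫ s in Set.Iio t, star (w.deriv s) ∂μ := by
    filter_upwards [ae_restrict_mem measurableSet_Ioo] with t ht
    rw [hIio (fun s => star (w.deriv s)) t ht, hstarint,
      h1_val w (Set.Ioo_subset_Icc_self ht), star_add]
  have h1 : Integrable (fun t => u.deriv t * star (w.toFun t)) μ :=
    integrable_mul_L2 u.memLp_deriv (memLp_star (memLp_toFun w))
  have h2 : Integrable (fun t => u.toFun t * star (w.deriv t)) μ :=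
    integrable_mul_L2 (memLp_toFun u) (memLp_star w.memLp_deriv)
  have hF : Integrable (fun t => u.deriv t * ∫ s in Set.Iio t, star (w.deriv s) ∂μ) μ := by
    refine (h1.sub (hfu.mul_const (star (w.toFun 0)))).congr ?_
    filter_upwards [haew] with t ht
    simp only [Pi.sub_apply]
    rw [ht]; ring
  have hG : Integrable (fun t => (∫ s in Set.Iio t, u.deriv s ∂μ) * star (w.deriv t)) μ := by
    refine (h2.sub (hgw.const_mul (u.toFun 0))).congr ?_
    filter_upwards [haeu] with t ht
    simp only [Pi.sub_apply]
    rw [ht]; ring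
  have e1 : (∫ t, u.deriv t * star (w.toFun t) ∂μ)
      = (∫ t, u.deriv t ∂μ) * star (w.toFun 0)
        + ∫ t, u.deriv t * ∫ s in Set.Iio t, star (w.deriv s) ∂μ ∂μ := by
    rw [← integral_mul_const, ← integral_add (hfu.mul_const _) hF]
    refine integral_congr_ae ?_
    filter_upwards [haew] with t ht
    rw [ht]; ring
  have e2 : (∫ t, u.toFun t * star (w.deriv t) ∂μ)
      = u.toFun 0 * (∫ t, star (w.deriv t) ∂μ)
        + ∫ t, (∫ s in Set.Iio t, u.deriv s ∂μ) * star (w.deriv t) ∂μ := by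
    rw [← integral_const_mul, ← integral_add (hgw.const_mul _) hG]
    refine integral_congr_ae ?_
    filter_upwards [haeu] with t ht
    rw [ht]; ring
  have hkey := key_parts μ hdiag u.deriv (fun t => star (w.deriv t)) hfu hgw
  calc (∫ t, u.deriv t * star (w.toFun t) ∂μ) + ∫ t, u.toFun t * star (w.deriv t) ∂μ
      = (∫ t, u.deriv t ∂μ) * star (w.toFun 0) + u.toFun 0 * (∫ t, star (w.deriv t) ∂μ)
        + ((∫ t, u.deriv t * ∫ s in Set.Iio t, star (w.deriv s) ∂μ ∂μ)
          + ∫ t, (∫ s in Set.Iio t, u.deriv s ∂μ) * star (w.deriv t) ∂μ) := by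
        rw [e1, e2]; ring
    _ = u.toFun L * star (w.toFun L) - u.toFun 0 * star (w.toFun 0) := by
        rw [hkey, hA, hB]; ring

/-- If `(β, η, γ)` solves `-β' + γ - iωη = f₂`, `η' + iωβ = g₂`,
`η + iω λ⁻¹ γ = g₃` a.e. on `(0,L)` with `β(0) = 0` and `λ̃ η(L) = iω β(L)`, where
`λ̃ = (λ - ω²)^{1/2}` is the principal square root, then `β` satisfies the weak second-order
formulation: for all `v ∈ H¹(0,L)` with `v(0) = 0`,
`(β',v') + (λ-ω²)(β,v) + λ̃ β(L) conj(v(L)) = -(f₂,v') + (λ/(iω))(g₃,v') + ((λ-ω²)/(iω))(g₂,v)`. -/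
theorem weak_form_beta (L ω lam : ℝ) (hL : 0 < L) (hω : 0 < ω) (hlam : 0 < lam)
    (hne : lam ≠ ω ^ 2)
    (f₂ g₂ g₃ : ℝ → ℂ)
    (hf₂ : MemLp f₂ 2 (volume.restrict (Set.Ioo (0:ℝ) L)))
    (hg₂ : MemLp g₂ 2 (volume.restrict (Set.Ioo (0:ℝ) L)))
    (hg₃ : MemLp g₃ 2 (volume.restrict (Set.Ioo (0:ℝ) L)))
    (β η : H1 L) (γ : ℝ → ℂ) (hγ : MemLp γ 2 (volume.restrict (Set.Ioo (0:ℝ) L)))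
    (hode : ∀ᵐ t ∂(volume.restrict (Set.Ioo (0:ℝ) L)),
      -β.deriv t + γ t - Complex.I * ω * η.toFun t = f₂ t ∧
      η.deriv t + Complex.I * ω * β.toFun t = g₂ t ∧
      η.toFun t + Complex.I * ω * (lam : ℂ)⁻¹ * γ t = g₃ t)
    (hbc0 : β.toFun 0 = 0)
    (hbcL : (((lam : ℂ) - (ω : ℂ) ^ 2) ^ ((1 : ℂ) / 2)) * η.toFun L
        = Complex.I * ω * β.toFun L) :
    ∀ v : H1 L, v.toFun 0 = 0 →
      (∫ t in Set.Ioo (0:ℝ) L, β.deriv t * star (v.deriv t)) +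
        ((lam : ℂ) - (ω : ℂ) ^ 2) * (∫ t in Set.Ioo (0:ℝ) L, β.toFun t * star (v.toFun t)) +
        (((lam : ℂ) - (ω : ℂ) ^ 2) ^ ((1 : ℂ) / 2)) * β.toFun L * star (v.toFun L)
      = -(∫ t in Set.Ioo (0:ℝ) L, f₂ t * star (v.deriv t)) +
        ((lam : ℂ) / (Complex.I * ω)) * (∫ t in Set.Ioo (0:ℝ) L, g₃ t * star (v.deriv t)) +
        (((lam : ℂ) - (ω : ℂ) ^ 2) / (Complex.I * ω)) *
          ∫ t in Set.Ioo (0:ℝ) L, g₂ t * star (v.toFun t) := by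
  intro v hv0
  haveI := isFiniteMeasure_muL L
  have hω0 : (ω : ℂ) ≠ 0 := Complex.ofReal_ne_zero.2 hω.ne'
  have hlam0 : (lam : ℂ) ≠ 0 := Complex.ofReal_ne_zero.2 hlam.ne'
  have hd : Complex.I * (ω : ℂ) ≠ 0 := mul_ne_zero Complex.I_ne_zero hω0
  have hc0 : ((lam : ℂ) - (ω : ℂ) ^ 2) ≠ 0 := by
    intro h
    exact hne (by exact_mod_cast sub_eq_zero.1 h)
  have hr2 : ((((lam : ℂ) - (ω : ℂ) ^ 2) ^ ((1 : ℂ) / 2))) ^ 2 = (lam : ℂ) - (ω : ℂ) ^ 2 := by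
    rw [one_div]; exact Complex.cpow_ofNat_inv_pow _ 2
  set μ := volume.restrict (Set.Ioo (0:ℝ) L) with hμ
  -- a.e. formula for β.deriv (multiplied by I ω)
  have hβ' : ∀ᵐ t ∂μ, (Complex.I * ω) * β.deriv t
      = -(Complex.I * ω) * f₂ t + (lam : ℂ) * g₃ t
        - ((lam : ℂ) - (ω : ℂ) ^ 2) * η.toFun t := by
    filter_upwards [hode] with t ht
    obtain ⟨h1, h2, h3⟩ := ht
    have h3' : (lam : ℂ) * η.toFun t + Complex.I * ω * γ t = (lam : ℂ) * g₃ t := by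
      have e := congrArg (fun z : ℂ => (lam : ℂ) * z) h3
      simp only [mul_add] at e
      rw [show (lam : ℂ) * (Complex.I * ω * (lam : ℂ)⁻¹ * γ t) = Complex.I * ω * γ t from by
        field_simp] at e
      exact e
    linear_combination -(Complex.I * (ω:ℂ)) * h1 + h3'
      - (ω:ℂ)^2 * η.toFun t * Complex.I_sq
  -- integrability of the products
  have iβ'v' := integrable_mul_L2 β.memLp_deriv (memLp_star v.memLp_deriv)
  have if₂v' := integrable_mul_L2 hf₂ (memLp_star v.memLp_deriv)
  have ig₃v' := integrable_mul_L2 hg₃ (memLp_star v.memLp_deriv)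
  have iηv' := integrable_mul_L2 (memLp_toFun η) (memLp_star v.memLp_deriv)
  have ig₂v := integrable_mul_L2 hg₂ (memLp_star (memLp_toFun v))
  have iβv := integrable_mul_L2 (memLp_toFun β) (memLp_star (memLp_toFun v))
  have iη'v := integrable_mul_L2 η.memLp_deriv (memLp_star (memLp_toFun v))
  -- first integral identity
  have hP : (Complex.I * ω) * (∫ t, β.deriv t * star (v.deriv t) ∂μ)
      = -(Complex.I * ω) * (∫ t, f₂ t * star (v.deriv t) ∂μ)
        + (lam : ℂ) * (∫ t, g₃ t * star (v.deriv t) ∂μ)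
        - ((lam : ℂ) - (ω : ℂ) ^ 2) * (∫ t, η.toFun t * star (v.deriv t) ∂μ) := by
    have e : (∫ t, (Complex.I * ω) * (β.deriv t * star (v.deriv t)) ∂μ)
        = ∫ t, ((-(Complex.I * ω)) * (f₂ t * star (v.deriv t))
            + (lam : ℂ) * (g₃ t * star (v.deriv t))
            + (-((lam : ℂ) - (ω : ℂ) ^ 2)) * (η.toFun t * star (v.deriv t))) ∂μ := by
      refine integral_congr_ae ?_
      filter_upwards [hβ'] with t h
      linear_combination star (v.deriv t) * h
    have h12 : Integrable (fun t => (-(Complex.I * (ω:ℂ))) * (f₂ t * star (v.deriv t))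
        + (lam : ℂ) * (g₃ t * star (v.deriv t))) μ :=
      (if₂v'.const_mul _).add (ig₃v'.const_mul _)
    rw [← integral_const_mul, e,
      integral_add h12 (iηv'.const_mul _),
      integral_add (if₂v'.const_mul _) (ig₃v'.const_mul _),
      integral_const_mul, integral_const_mul, integral_const_mul]
    ring
  -- second integral identity
  have hSg2 : (∫ t, g₂ t * star (v.toFun t) ∂μ)
      = (∫ t, η.deriv t * star (v.toFun t) ∂μ)
        + (Complex.I * ω) * (∫ t, β.toFun t * star (v.toFun t) ∂μ) := by
    have e : (∫ t, g₂ t * star (v.toFun t) ∂μ)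
        = ∫ t, (η.deriv t * star (v.toFun t)
            + (Complex.I * ω) * (β.toFun t * star (v.toFun t))) ∂μ := by
      refine integral_congr_ae ?_
      filter_upwards [hode] with t ht
      obtain ⟨h1, h2, h3⟩ := ht
      linear_combination -star (v.toFun t) * h2
    rw [e, integral_add iη'v (iβv.const_mul _), integral_const_mul]
  -- integration by parts
  have hparts := h1_parts hL η v
  rw [hv0] at hparts
  simp only [star_zero, mul_zero, sub_zero] at hparts
  -- final assembly
  refine mul_left_cancel₀ hd ?_
  have expand : (Complex.I * (ω : ℂ)) * (-(∫ t, f₂ t * star (v.deriv t) ∂μ)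
      + ((lam : ℂ) / (Complex.I * ω)) * (∫ t, g₃ t * star (v.deriv t) ∂μ)
      + (((lam : ℂ) - (ω : ℂ) ^ 2) / (Complex.I * ω)) * (∫ t, g₂ t * star (v.toFun t) ∂μ))
      = -(Complex.I * ω) * (∫ t, f₂ t * star (v.deriv t) ∂μ)
        + (lam : ℂ) * (∫ t, g₃ t * star (v.deriv t) ∂μ)
        + ((lam : ℂ) - (ω : ℂ) ^ 2) * (∫ t, g₂ t * star (v.toFun t) ∂μ) := by
    field_simp
  rw [expand]
  linear_combination hP - ((lam : ℂ) - (ω : ℂ) ^ 2) * hSg2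
    - ((lam : ℂ) - (ω : ℂ) ^ 2) * hparts
    - ((((lam : ℂ) - (ω : ℂ) ^ 2) ^ ((1 : ℂ) / 2)) * star (v.toFun L)) * hbcL
    + (η.toFun L * star (v.toFun L)) * hr2
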